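/- Let t₀ ≥ 1 and t₁ ≥ 1 be natural numbers and T = t₀ + t₁. For any natural number k with 1 ≤ k, the number of sequences s : Fin T → Bool having exactly t₀ entries equal to false and t₁ entries equal to true and whose number of runs U(s) equals 2k is 2·C(t₀ − 1, k − 1)·C(t₁ − 1, k − 1), where C(n, r) denotes the binomial coefficient. -/

import Mathlib

namespace WW

def cF {n : ℕ} (s : Fin n → Bool) : ℕ := ∑ i, if s i = false then 1 else 0
def cT {n : ℕ} (s : Fin n → Bool) : ℕ := ∑ i, if s i = true then 1 else 0
def chg {n : ℕ} (s : Fin (n+1) → Bool) : ℕ :=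
  ∑ i : Fin n, if s i.castSucc ≠ s i.succ then 1 else 0

def S (n t₀ t₁ u : ℕ) (b : Bool) : ℕ :=
  (Finset.univ.filter (fun s : Fin (n+1) → Bool =>
     cF s = t₀ ∧ cT s = t₁ ∧ chg s = u ∧ s 0 = b)).card

def cc (t m : ℕ) : ℕ :=
  if m = 0 then (if t = 0 then 1 else 0)
  else if t = 0 then 0 else Nat.choose (t-1) (m-1)

lemma cF_cons {n : ℕ} (b : Bool) (t : Fin n → Bool) :
    cF (Fin.cons b t) = (if b = false then 1 else 0) + cF t := by
  unfold cF
  rw [Fin.sum_univ_succ]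
  simp

lemma cT_cons {n : ℕ} (b : Bool) (t : Fin n → Bool) :
    cT (Fin.cons b t) = (if b = true then 1 else 0) + cT t := by
  unfold cT
  rw [Fin.sum_univ_succ]
  simp

lemma chg_cons {n : ℕ} (b : Bool) (t : Fin (n+1) → Bool) :
    chg (Fin.cons b t) = (if b ≠ t 0 then 1 else 0) + chg t := by
  unfold chg
  rw [Fin.sum_univ_succ]
  have h1 : ∀ i : Fin n, (Fin.cons b t : Fin (n+2) → Bool) i.succ.castSucc = t i.castSucc := by
    intro i
    rw [← Fin.succ_castSucc]
    simp
  have h2 : ∀ i : Fin n, (Fin.cons b t : Fin (n+2) → Bool) i.succ.succ = t i.succ := by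
    intro i; simp
  simp only [h1, h2, Fin.castSucc_zero, Fin.cons_zero, Fin.cons_succ]

lemma cF_not {n : ℕ} (s : Fin n → Bool) : cF (fun i => !(s i)) = cT s := by
  unfold cF cT
  refine Finset.sum_congr rfl fun i _ => ?_
  cases h : s i <;> simp [h]

lemma cT_not {n : ℕ} (s : Fin n → Bool) : cT (fun i => !(s i)) = cF s := by
  unfold cF cT
  refine Finset.sum_congr rfl fun i _ => ?_
  cases h : s i <;> simp [h]

lemma chg_not {n : ℕ} (s : Fin (n+1) → Bool) : chg (fun i => !(s i)) = chg s := by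
  unfold chg
  refine Finset.sum_congr rfl fun i _ => ?_
  simp

lemma S_swap (n t₀ t₁ u : ℕ) (b : Bool) : S n t₀ t₁ u b = S n t₁ t₀ u (!b) := by
  unfold S
  refine Finset.card_nbij' (fun s i => !(s i)) (fun s i => !(s i)) ?_ ?_ ?_ ?_
  · intro s hs
    simp only [Finset.coe_filter, Finset.mem_filter, Finset.mem_univ, true_and, Set.mem_setOf_eq] at hs ⊢
    obtain ⟨h1, h2, h3, h4⟩ := hs
    exact ⟨by rw [cF_not, h2], by rw [cT_not, h1], by rw [chg_not, h3], by rw [h4]⟩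
  · intro s hs
    simp only [Finset.coe_filter, Finset.mem_filter, Finset.mem_univ, true_and, Set.mem_setOf_eq] at hs ⊢
    obtain ⟨h1, h2, h3, h4⟩ := hs
    exact ⟨by rw [cF_not, h2], by rw [cT_not, h1], by rw [chg_not, h3], by rw [h4]; simp⟩
  · intro s _; funext i; simp
  · intro s _; funext i; simp

lemma S_zero_false (t₀ t₁ u : ℕ) :
    S 0 t₀ t₁ u false = if t₀ = 1 ∧ t₁ = 0 ∧ u = 0 then 1 else 0 := by
  unfold S
  have huniv : (Finset.univ : Finset (Fin 1 → Bool)) = {fun _ => false, fun _ => true} := by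
    decide
  have hval : ∀ s : Fin 1 → Bool, cF s = (if s 0 = false then 1 else 0) ∧
      cT s = (if s 0 = true then 1 else 0) ∧ chg s = 0 := by
    intro s
    refine ⟨?_, ?_, ?_⟩
    · unfold cF; rw [Fin.sum_univ_one]
    · unfold cT; rw [Fin.sum_univ_one]
    · unfold chg; simp
  rw [huniv]
  by_cases hc : t₀ = 1 ∧ t₁ = 0 ∧ u = 0
  · obtain ⟨rfl, rfl, rfl⟩ := hc
    rw [if_pos ⟨rfl, rfl, rfl⟩]
    rw [Finset.filter_insert, Finset.filter_singleton]
    have e1 := hval (fun _ => false)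
    have e2 := hval (fun _ => true)
    simp only [e1.1, e1.2.1, e1.2.2, e2.1, e2.2.1, e2.2.2] at *
    simp
  · rw [if_neg hc]
    rw [Finset.card_eq_zero, Finset.filter_insert, Finset.filter_singleton]
    have e1 := hval (fun _ => false)
    have e2 := hval (fun _ => true)
    split_ifs with h1 h2 h3
    · simp at h2
    · exfalso
      refine hc ⟨?_, ?_, ?_⟩
      · rw [← h1.1, e1.1]; simp
      · rw [← h1.2.1, e1.2.1]; simp
      · rw [← h1.2.2.1, e1.2.2]
    · simp at h3
    · simp

lemma S_t0_zero_false (n t₁ u : ℕ) : S n 0 t₁ u false = 0 := by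
  unfold S
  rw [Finset.card_eq_zero, Finset.filter_eq_empty_iff]
  rintro s - ⟨h1, -, -, h4⟩
  have : (if s 0 = false then 1 else 0) ≤ cF s := by
    unfold cF
    exact Finset.single_le_sum (f := fun i => if s i = false then (1:ℕ) else 0)
      (fun i _ => by positivity) (Finset.mem_univ 0)
  rw [h4, if_pos rfl] at this
  omega

lemma sum_cons_false (n t₀ t₁ u : ℕ) (h : 1 ≤ t₀) :
    ∑ t : Fin (n+1) → Bool,
      (if cF (Fin.cons false t : Fin (n+2) → Bool) = t₀ ∧
          cT (Fin.cons false t : Fin (n+2) → Bool) = t₁ ∧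
          chg (Fin.cons false t : Fin (n+2) → Bool) = u ∧
          (Fin.cons false t : Fin (n+2) → Bool) 0 = false then 1 else 0) =
      S n (t₀-1) t₁ u false + (if u = 0 then 0 else S n (t₀-1) t₁ (u-1) true) := by
  have key : ∀ t : Fin (n+1) → Bool,
      (cF (Fin.cons false t : Fin (n+2) → Bool) = t₀ ∧
        cT (Fin.cons false t : Fin (n+2) → Bool) = t₁ ∧
        chg (Fin.cons false t : Fin (n+2) → Bool) = u ∧
        (Fin.cons false t : Fin (n+2) → Bool) 0 = false)
      ↔ (1 + cF t = t₀ ∧ cT t = t₁ ∧ (if t 0 = true then 1 else 0) + chg t = u) := by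
    intro t
    rw [cF_cons, cT_cons, chg_cons]
    cases h0 : t 0 <;> simp [h0]
  rw [← Finset.card_filter]
  rw [Finset.filter_congr (fun t _ => key t)]
  have split := Finset.card_filter_add_card_filter_not
    (s := (Finset.univ.filter (fun t : Fin (n+1) → Bool =>
      1 + cF t = t₀ ∧ cT t = t₁ ∧ (if t 0 = true then 1 else 0) + chg t = u)))
    (p := fun t : Fin (n+1) → Bool => t 0 = false)
  rw [Finset.filter_filter, Finset.filter_filter] at split
  rw [← split]
  have e1 : Finset.filter (fun a : Fin (n+1) → Bool =>
        (1 + cF a = t₀ ∧ cT a = t₁ ∧ (if a 0 = true then 1 else 0) + chg a = u) ∧ a 0 = false)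
        Finset.univ
      = Finset.filter (fun a : Fin (n+1) → Bool =>
        cF a = t₀ - 1 ∧ cT a = t₁ ∧ chg a = u ∧ a 0 = false) Finset.univ := by
    clear key split
    refine Finset.filter_congr ?_
    intro t _
    constructor
    · rintro ⟨⟨a, b, c⟩, d⟩
      rw [if_neg (by simp [d])] at c
      exact ⟨by omega, b, by omega, d⟩
    · rintro ⟨a, b, c, d⟩
      refine ⟨⟨by omega, b, ?_⟩, d⟩
      rw [if_neg (by simp [d])]
      omega
  have e2 : Finset.filter (fun a : Fin (n+1) → Bool =>
        (1 + cF a = t₀ ∧ cT a = t₁ ∧ (if a 0 = true then 1 else 0) + chg a = u) ∧ ¬a 0 = false)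
        Finset.univ
      = Finset.filter (fun a : Fin (n+1) → Bool =>
        (1 ≤ u) ∧ cF a = t₀ - 1 ∧ cT a = t₁ ∧ chg a = u - 1 ∧ a 0 = true) Finset.univ := by
    clear key split
    refine Finset.filter_congr ?_
    intro t _
    rw [Bool.not_eq_false]
    constructor
    · rintro ⟨⟨a, b, c⟩, d⟩
      rw [if_pos d] at c
      exact ⟨by omega, by omega, b, by omega, d⟩
    · rintro ⟨hu, a, b, c, d⟩
      refine ⟨⟨by omega, b, ?_⟩, d⟩
      rw [if_pos d]
      omega
  rw [e1, e2]
  clear key split e1 e2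
  congr 1
  by_cases hu : u = 0
  · rw [if_pos hu, Finset.card_eq_zero, Finset.filter_eq_empty_iff]
    rintro t -
    rintro ⟨h1, -⟩
    omega
  · rw [if_neg hu]
    unfold S
    refine congrArg Finset.card (Finset.filter_congr ?_)
    intro t _
    simp only [and_iff_right_iff_imp]
    intro
    omega

lemma S_succ_false (n t₀ t₁ u : ℕ) (h : 1 ≤ t₀) :
    S (n+1) t₀ t₁ u false =
      S n (t₀-1) t₁ u false + (if u = 0 then 0 else S n (t₀-1) t₁ (u-1) true) := by
  conv_lhs => rw [S, Finset.card_filter]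
  rw [← Equiv.sum_comp (Fin.consEquiv (fun _ : Fin (n+2) => Bool))]
  rw [Fintype.sum_prod_type, Fintype.sum_bool]
  have ce : ∀ (b : Bool) (t : Fin (n+1) → Bool),
      (Fin.consEquiv fun _ : Fin (n+2) => Bool) (b, t) = Fin.cons b t := fun _ _ => rfl
  simp only [ce]
  have h0 : ∑ t : Fin (n+1) → Bool,
      (if cF (Fin.cons true t : Fin (n+2) → Bool) = t₀ ∧
          cT (Fin.cons true t : Fin (n+2) → Bool) = t₁ ∧
          chg (Fin.cons true t : Fin (n+2) → Bool) = u ∧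
          (Fin.cons true t : Fin (n+2) → Bool) 0 = false then 1 else 0) = 0 := by
    refine Finset.sum_eq_zero fun t _ => ?_
    rw [if_neg]
    rintro ⟨-, -, -, h4⟩
    simp at h4
  rw [h0, zero_add]
  exact sum_cons_false n t₀ t₁ u h

lemma cc_rec (t m : ℕ) (ht : 1 ≤ t) (hm : 1 ≤ m) :
    cc t m = cc (t-1) m + cc (t-1) (m-1) := by
  obtain ⟨t, rfl⟩ : ∃ t', t = t' + 1 := ⟨t - 1, by omega⟩
  obtain ⟨m, rfl⟩ : ∃ m', m = m' + 1 := ⟨m - 1, by omega⟩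
  simp only [Nat.add_sub_cancel]
  cases t with
  | zero =>
    cases m with
    | zero => simp [cc]
    | succ m => simp [cc]
  | succ t =>
    cases m with
    | zero => simp [cc]
    | succ m =>
      simp only [cc, Nat.succ_ne_zero, if_false, Nat.add_sub_cancel]
      rw [Nat.choose_succ_succ, Nat.succ_eq_add_one, Nat.add_comm]

lemma cc_zero_left (m : ℕ) (hm : 1 ≤ m) : cc 0 m = 0 := by
  unfold cc
  rw [if_neg (by omega), if_pos rfl]

lemma S_closed : ∀ n t₀ t₁ u, t₀ + t₁ = n + 1 →
    S n t₀ t₁ u false = cc t₀ (u/2+1) * cc t₁ ((u+1)/2) := by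
  intro n
  induction n with
  | zero =>
    intro t₀ t₁ u hsum
    rcases (by omega : t₀ = 1 ∧ t₁ = 0 ∨ t₀ = 0 ∧ t₁ = 1) with ⟨rfl, rfl⟩ | ⟨rfl, rfl⟩
    · rw [S_zero_false]
      by_cases hu : u = 0
      · subst hu; simp [cc]
      · rw [if_neg (by simp [hu])]
        rw [cc_zero_left ((u+1)/2) (by omega), mul_zero]
    · rw [S_zero_false, if_neg (by omega)]
      rw [cc_zero_left (u/2+1) (by omega), zero_mul]
  | succ n ih =>
    intro t₀ t₁ u hsum
    by_cases ht0 : t₀ = 0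
    · subst ht0
      rw [S_t0_zero_false, cc_zero_left (u/2+1) (by omega), zero_mul]
    · have h : 1 ≤ t₀ := by omega
      rw [S_succ_false n t₀ t₁ u h]
      have ih1 : S n (t₀-1) t₁ u false = cc (t₀-1) (u/2+1) * cc t₁ ((u+1)/2) :=
        ih (t₀-1) t₁ u (by omega)
      by_cases hu : u = 0
      · subst hu
        rw [if_pos rfl, add_zero, ih1]
        norm_num
        by_cases ht1 : t₁ = 0
        · have h2 : t₀ = n + 2 := by omega
          have c1 : cc (t₀-1) 1 = 1 := by
            unfold cc
            rw [if_neg one_ne_zero, if_neg (by omega)]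
            exact Nat.choose_zero_right _
          have c2 : cc t₀ 1 = 1 := by
            unfold cc
            rw [if_neg one_ne_zero, if_neg (by omega)]
            exact Nat.choose_zero_right _
          rw [c1, c2]
          exact Or.inl rfl
        · have c0 : cc t₁ 0 = 0 := by unfold cc; simp [ht1]
          exact Or.inr c0
      · rw [if_neg hu, ih1]
        have ih2 : S n (t₀-1) t₁ (u-1) true = cc t₁ ((u-1)/2+1) * cc (t₀-1) ((u-1+1)/2) := by
          rw [S_swap, Bool.not_true]
          exact ih t₁ (t₀-1) (u-1) (by omega)
        rw [ih2]
        have hh1 : (u-1)/2 + 1 = (u+1)/2 := by omega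
        have hh2 : (u-1+1)/2 = u/2 := by omega
        rw [hh1, hh2]
        rw [cc_rec t₀ (u/2+1) (by omega) (by omega)]
        simp only [Nat.add_sub_cancel]
        ring

lemma chg_card {n : ℕ} (s : Fin (n+1) → Bool) :
    (Finset.univ.filter (fun p : Fin (n+1) × Fin (n+1) =>
      (p.1 : ℕ) + 1 = (p.2 : ℕ) ∧ s p.1 ≠ s p.2)).card
      = (Finset.univ.filter (fun i : Fin n => s i.castSucc ≠ s i.succ)).card := by
  refine (Finset.card_nbij (fun i : Fin n => (i.castSucc, i.succ)) ?_ ?_ ?_).symm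
  · intro i hi
    simp only [Finset.coe_filter, Finset.mem_filter, Finset.mem_univ, true_and, Set.mem_setOf_eq] at hi ⊢
    exact ⟨by simp, hi⟩
  · intro i _ j _ hij
    have := congrArg (fun q : Fin (n+1) × Fin (n+1) => (q.1 : ℕ)) hij
    simpa [Fin.ext_iff] using this
  · intro p hp
    simp only [Finset.coe_filter, Set.mem_setOf_eq, Finset.mem_univ, true_and] at hp
    obtain ⟨h1, h2⟩ := hp
    have hlt : (p.1 : ℕ) < n := by have := p.2.isLt; omega
    have e1 : (⟨(p.1:ℕ), hlt⟩ : Fin n).castSucc = p.1 := by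
      apply Fin.ext; simp
    have e2 : (⟨(p.1:ℕ), hlt⟩ : Fin n).succ = p.2 := by
      apply Fin.ext; simp only [Fin.val_succ]; omega
    refine ⟨⟨(p.1:ℕ), hlt⟩, ?_, ?_⟩
    · simp only [Finset.coe_filter, Set.mem_setOf_eq, Finset.mem_univ, true_and, e1, e2]
      exact h2
    · rw [Prod.ext_iff]
      exact ⟨e1, e2⟩

lemma chg_eq_sum {n : ℕ} (s : Fin (n+1) → Bool) :
    (Finset.univ.filter (fun i : Fin n => s i.castSucc ≠ s i.succ)).card = chg s := by
  rw [chg, Finset.card_filter]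

end WW


/-- The number of runs of a finite boolean sequence `s : Fin T → Bool`:
one plus the number of adjacent positions at which the value changes. -/
def numRuns {T : ℕ} (s : Fin T → Bool) : ℕ :=
  1 + (Finset.univ.filter
        (fun p : Fin T × Fin T => (p.1 : ℕ) + 1 = (p.2 : ℕ) ∧ s p.1 ≠ s p.2)).card

/-- **Combinatorial count for the Wald–Wolfowitz runs test (even case, Section 4.1 of the
paper).** The number of boolean sequences of length `T = t₀ + t₁` with exactly `t₀` entries
`false` and `t₁` entries `true` having exactly `2k` runs is
`2 · C(t₀−1, k−1) · C(t₁−1, k−1)`. -/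
theorem card_sequences_with_even_runs (t₀ t₁ : ℕ) (h₀ : 1 ≤ t₀) (h₁ : 1 ≤ t₁)
    (k : ℕ) (hk : 1 ≤ k) :
    (Finset.univ.filter (fun s : Fin (t₀ + t₁) → Bool =>
        (Finset.univ.filter (fun i => s i = false)).card = t₀ ∧
        (Finset.univ.filter (fun i => s i = true)).card = t₁ ∧
        numRuns s = 2 * k)).card =
      2 * Nat.choose (t₀ - 1) (k - 1) * Nat.choose (t₁ - 1) (k - 1) := by
  obtain ⟨n, hn⟩ : ∃ n, t₀ + t₁ = n + 1 := ⟨t₀ + t₁ - 1, by omega⟩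
  rw [hn]
  have hpred : ∀ s : Fin (n+1) → Bool,
      ((Finset.univ.filter (fun i => s i = false)).card = t₀ ∧
       (Finset.univ.filter (fun i => s i = true)).card = t₁ ∧
       numRuns s = 2 * k)
      ↔ (WW.cF s = t₀ ∧ WW.cT s = t₁ ∧ WW.chg s = 2*k - 1) := by
    intro s
    have hF : (Finset.univ.filter (fun i => s i = false)).card = WW.cF s := by
      rw [WW.cF, Finset.card_filter]
    have hT : (Finset.univ.filter (fun i => s i = true)).card = WW.cT s := by
      rw [WW.cT, Finset.card_filter]
    have hR : numRuns s = 1 + WW.chg s := by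
      rw [numRuns, WW.chg_card, WW.chg_eq_sum]
    rw [hF, hT, hR]
    constructor
    · rintro ⟨a, b, c⟩
      exact ⟨a, b, by omega⟩
    · rintro ⟨a, b, c⟩
      exact ⟨a, b, by omega⟩
  rw [Finset.filter_congr (fun s _ => hpred s)]
  have split := Finset.card_filter_add_card_filter_not
    (s := Finset.univ.filter (fun s : Fin (n+1) → Bool =>
      WW.cF s = t₀ ∧ WW.cT s = t₁ ∧ WW.chg s = 2*k-1))
    (p := fun s : Fin (n+1) → Bool => s 0 = false)
  rw [Finset.filter_filter, Finset.filter_filter] at split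
  rw [← split]
  have A : (Finset.univ.filter (fun s : Fin (n+1) → Bool =>
      (WW.cF s = t₀ ∧ WW.cT s = t₁ ∧ WW.chg s = 2*k-1) ∧ s 0 = false)).card
      = WW.S n t₀ t₁ (2*k-1) false := by
    rw [WW.S]
    refine congrArg Finset.card (Finset.filter_congr ?_)
    intro s _
    tauto
  have B : (Finset.univ.filter (fun s : Fin (n+1) → Bool =>
      (WW.cF s = t₀ ∧ WW.cT s = t₁ ∧ WW.chg s = 2*k-1) ∧ ¬s 0 = false)).card
      = WW.S n t₀ t₁ (2*k-1) true := by
    rw [WW.S]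
    refine congrArg Finset.card (Finset.filter_congr ?_)
    intro s _
    rw [Bool.not_eq_false]
    tauto
  rw [A, B]
  clear split hpred A B
  rw [WW.S_swap n t₀ t₁ (2*k-1) true, Bool.not_true]
  rw [WW.S_closed n t₀ t₁ (2*k-1) hn]
  rw [WW.S_closed n t₁ t₀ (2*k-1) (by omega)]
  have hk1 : (2*k-1)/2 + 1 = k := by omega
  have hk2 : (2*k-1+1)/2 = k := by omega
  rw [hk1, hk2]
  have hcc : ∀ t : ℕ, 1 ≤ t → WW.cc t k = Nat.choose (t-1) (k-1) := by
    intro t ht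
    rw [WW.cc, if_neg (by omega), if_neg (by omega)]
  rw [hcc t₀ h₀, hcc t₁ h₁]
  ring
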